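/- (Poincaré–Wirtinger's inequality) Let Φ : ℝ^d → [0,∞) be an N_∞ function, A_Φ its greatest convex radial minorant, identified with the invertible increasing function Ā : [0,∞) → [0,∞) via A_Φ(x) = Ā(|x|). For every u ∈ W^1L^Φ([0,T],ℝ^d), writing ū = (1/T)∫_0^T u(t) dt and ũ = u − ū, one has sup_{t∈[0,T]} |ũ(t)| ≤ T · Ā^{−1}(1/T) · ‖u'‖_{L^Φ}. -/

import Mathlib

open MeasureTheory Filter Set
open scoped ENNReal RealInnerProductSpace Topology

noncomputable section

/-- `ℝ^d` with the euclidean norm. -/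
abbrev Ed (d : ℕ) : Type := EuclideanSpace ℝ (Fin d)

/-- `Φ` is an `N_∞` function: differentiable, convex, nonnegative, vanishing exactly at `0`,
even, and superlinear at infinity. -/
def IsNInf {m : ℕ} (Φ : Ed m → ℝ) : Prop :=
  Differentiable ℝ Φ ∧ ConvexOn ℝ Set.univ Φ ∧ (∀ y, 0 ≤ Φ y) ∧ Φ 0 = 0 ∧
    (∀ y, y ≠ 0 → 0 < Φ y) ∧ (∀ y, Φ (-y) = Φ y) ∧
    Tendsto (fun y => Φ y / ‖y‖) (comap (fun y : Ed m => ‖y‖) atTop) atTop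

variable {d : ℕ}

/-- The modular `ρ_Φ(u) = ∫_0^T Φ(u(t)) dt`, as an extended nonnegative real. -/
def rhoE (T : ℝ) (Φ : Ed d → ℝ) (u : ℝ → Ed d) : ℝ≥0∞ :=
  ∫⁻ t in Icc (0:ℝ) T, ENNReal.ofReal (Φ (u t))

/-- `u ∈ L^Φ([0,T], ℝ^d)`. -/
def MemLphi (T : ℝ) (Φ : Ed d → ℝ) (u : ℝ → Ed d) : Prop :=
  AEMeasurable u (volume.restrict (Icc (0:ℝ) T)) ∧
    ∃ l : ℝ, 0 < l ∧ rhoE T Φ (fun t => l • u t) < ⊤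

/-- The Luxemburg norm of `u` on `[0,T]`. -/
def luxNorm (T : ℝ) (Φ : Ed d → ℝ) (u : ℝ → Ed d) : ℝ :=
  sInf {l : ℝ | 0 < l ∧ rhoE T Φ (fun t => l⁻¹ • u t) ≤ 1}

/-- `u ∈ W^1L^Φ([0,T], ℝ^d)` with a.e. derivative `u'` : `u` is absolutely continuous,
being the integral of the (integrable) function `u'`, and `u' ∈ L^Φ`. -/
def MemW1Lphi (T : ℝ) (Φ : Ed d → ℝ) (u u' : ℝ → Ed d) : Prop :=
  IntegrableOn u' (Icc (0:ℝ) T) ∧ MemLphi T Φ u' ∧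
    ∀ t ∈ Icc (0:ℝ) T, u t = u 0 + ∫ s in (0:ℝ)..t, u' s

/-- `Ψ` is a convex, nonnegative, radial minorant of `Φ`. -/
def RadialConvexMinorant (Φ Ψ : Ed d → ℝ) : Prop :=
  ConvexOn ℝ Set.univ Ψ ∧ (∀ x, 0 ≤ Ψ x) ∧ (∀ x y, ‖x‖ = ‖y‖ → Ψ x = Ψ y) ∧ ∀ x, Ψ x ≤ Φ x

/-- `A_Φ`, the greatest convex radial minorant of `Φ`. -/
def APhi (Φ : Ed d → ℝ) (x : Ed d) : ℝ :=
  sSup {r : ℝ | ∃ Ψ, RadialConvexMinorant Φ Ψ ∧ r = Ψ x}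

/-! ### Auxiliary lemmas about `APhi` -/

variable {Φ : Ed d → ℝ}

lemma rcm_zero (h0 : ∀ x, 0 ≤ Φ x) : RadialConvexMinorant Φ (fun _ => 0) :=
  ⟨convexOn_const _ convex_univ, fun _ => le_rfl, fun _ _ _ => rfl, h0⟩

lemma aphi_bdd (x : Ed d) : BddAbove {r : ℝ | ∃ Ψ, RadialConvexMinorant Φ Ψ ∧ r = Ψ x} :=
  ⟨Φ x, by rintro r ⟨Ψ, hΨ, rfl⟩; exact hΨ.2.2.2 x⟩

lemma aphi_nonneg (h0 : ∀ x, 0 ≤ Φ x) (x : Ed d) : 0 ≤ APhi Φ x :=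
  le_csSup (aphi_bdd x) ⟨fun _ => 0, rcm_zero h0, rfl⟩

lemma aphi_le (h0 : ∀ x, 0 ≤ Φ x) (x : Ed d) : APhi Φ x ≤ Φ x :=
  Real.sSup_le (by rintro r ⟨Ψ, hΨ, rfl⟩; exact hΨ.2.2.2 x) (h0 x)

lemma aphi_radial {x y : Ed d} (h : ‖x‖ = ‖y‖) : APhi Φ x = APhi Φ y := by
  unfold APhi
  congr 1
  ext r
  constructor
  · rintro ⟨Ψ, hΨ, rfl⟩; exact ⟨Ψ, hΨ, hΨ.2.2.1 x y h⟩
  · rintro ⟨Ψ, hΨ, rfl⟩; exact ⟨Ψ, hΨ, (hΨ.2.2.1 x y h).symm⟩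

lemma aphi_convex (h0 : ∀ x, 0 ≤ Φ x) : ConvexOn ℝ Set.univ (APhi Φ) := by
  refine ⟨convex_univ, fun x _ y _ a b ha hb hab => ?_⟩
  refine Real.sSup_le ?_
    (add_nonneg (mul_nonneg ha (aphi_nonneg h0 x)) (mul_nonneg hb (aphi_nonneg h0 y)))
  rintro r ⟨Ψ, hΨ, rfl⟩
  calc Ψ (a • x + b • y) ≤ a * Ψ x + b * Ψ y := hΨ.1.2 (mem_univ x) (mem_univ y) ha hb hab
    _ ≤ a * APhi Φ x + b * APhi Φ y := by
        gcongr
        · exact le_csSup (aphi_bdd x) ⟨Ψ, hΨ, rfl⟩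
        · exact le_csSup (aphi_bdd y) ⟨Ψ, hΨ, rfl⟩

lemma aphi_mono (h0 : ∀ x, 0 ≤ Φ x) {x y : Ed d} (h : ‖x‖ ≤ ‖y‖) : APhi Φ x ≤ APhi Φ y := by
  rcases eq_or_ne y 0 with rfl | hy
  · simp only [norm_zero] at h
    have hx : ‖x‖ = ‖(0:Ed d)‖ := by simpa using le_antisymm h (norm_nonneg x)
    exact (aphi_radial hx).le
  · have hyn : (0:ℝ) < ‖y‖ := norm_pos_iff.mpr hy
    set a : ℝ := (1 - ‖x‖/‖y‖)/2 with ha_def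
    set b : ℝ := (1 + ‖x‖/‖y‖)/2 with hb_def
    have hr : ‖x‖/‖y‖ ≤ 1 := (div_le_one hyn).mpr h
    have hr0 : 0 ≤ ‖x‖/‖y‖ := by positivity
    have ha : 0 ≤ a := by simp only [ha_def]; linarith
    have hb : 0 ≤ b := by simp only [hb_def]; linarith
    have hab : a + b = 1 := by simp only [ha_def, hb_def]; ring
    have hxy : APhi Φ x = APhi Φ (a • (-y) + b • y) := by
      apply aphi_radial
      have : a • (-y) + b • y = (‖x‖/‖y‖) • y := by rw [ha_def, hb_def]; module
      rw [this, norm_smul, Real.norm_of_nonneg hr0, div_mul_cancel₀ _ hyn.ne']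
    rw [hxy]
    have hneg : APhi Φ (-y) = APhi Φ y := aphi_radial (norm_neg y)
    calc APhi Φ (a • (-y) + b • y) ≤ a * APhi Φ (-y) + b * APhi Φ y :=
          (aphi_convex h0).2 (mem_univ _) (mem_univ _) ha hb hab
      _ = APhi Φ y := by rw [hneg]; nlinarith [aphi_nonneg h0 y]

lemma rho_scale {T : ℝ} (hconv : ConvexOn ℝ Set.univ Φ) (hΦ00 : Φ 0 = 0)
    {κ : ℝ} (hκ0 : 0 ≤ κ) (hκ1 : κ ≤ 1) (v : ℝ → Ed d) :
    rhoE T Φ (fun t => κ • v t) ≤ ENNReal.ofReal κ * rhoE T Φ v := by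
  unfold rhoE
  rw [← lintegral_const_mul' _ _ ENNReal.ofReal_ne_top]
  refine lintegral_mono fun t => ?_
  rw [← ENNReal.ofReal_mul hκ0]
  apply ENNReal.ofReal_le_ofReal
  have h : Φ (κ • v t + (1 - κ) • (0:Ed d)) ≤ κ * Φ (v t) + (1 - κ) * Φ 0 :=
    hconv.2 (mem_univ (v t)) (mem_univ (0:Ed d)) hκ0 (by linarith) (by ring)
  simpa [hΦ00] using h

set_option maxHeartbeats 1000000 in
/-- **Poincaré–Wirtinger's inequality.** For `u ∈ W^1L^Φ`, with
`ū = (1/T)∫_0^T u` and `ũ = u − ū`: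
`sup_{t∈[0,T]} |ũ(t)| ≤ T ⬝ Ā⁻¹(1/T) ⬝ ‖u'‖_{L^Φ}`. -/
theorem statement4 {d : ℕ} (T : ℝ) (hT : 0 < T) (Φ : Ed d → ℝ) (hΦ : IsNInf Φ)
    (Abar AbarInv : ℝ → ℝ)
    (hAbar : ∀ x : Ed d, Abar ‖x‖ = APhi Φ x)
    (hAbarInv : ∀ r ∈ Ici (0:ℝ), AbarInv r ∈ Ici (0:ℝ) ∧ Abar (AbarInv r) = r)
    (u u' : ℝ → Ed d) (hu : MemW1Lphi T Φ u u') (t : ℝ) (ht : t ∈ Icc (0:ℝ) T) :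
    ‖u t - T⁻¹ • ∫ s in Icc (0:ℝ) T, u s‖ ≤ T * AbarInv (1 / T) * luxNorm T Φ u' := by
  obtain ⟨hΦdiff, hΦconv, hΦ0le, hΦ00, hΦpos, hΦeven, hΦsup⟩ := hΦ
  obtain ⟨hu'int, hLphi, hAC⟩ := hu
  set S : Set ℝ := {l : ℝ | 0 < l ∧ rhoE T Φ (fun t => l⁻¹ • u' t) ≤ 1} with hS
  have hlux : luxNorm T Φ u' = sInf S := rfl
  -- the Luxemburg set is nonempty
  have hSne : S.Nonempty := by
    obtain ⟨l, hl, hfin⟩ := hLphi.2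
    set R := rhoE T Φ (fun t => l • u' t) with hR
    rcases le_or_gt R 1 with hR1 | hR1
    · exact ⟨l⁻¹, inv_pos.mpr hl, by simpa [inv_inv] using hR1⟩
    · have hRne0 : R ≠ 0 := by
        intro h; rw [h] at hR1; exact (not_lt.mpr zero_le_one) hR1
      have hRnetop : R ≠ ⊤ := hfin.ne
      have hκpos : 0 < R.toReal := ENNReal.toReal_pos hRne0 hRnetop
      have h1R : 1 ≤ R.toReal := by
        rw [← ENNReal.toReal_one]; exact ENNReal.toReal_mono hRnetop hR1.le
      have hκ1 : R.toReal⁻¹ ≤ 1 := by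
        rw [inv_le_one_iff₀]; right; exact h1R
      refine ⟨(R.toReal⁻¹ * l)⁻¹, by positivity, ?_⟩
      rw [inv_inv]
      have heq : (fun t => (R.toReal⁻¹ * l) • u' t) = fun t => R.toReal⁻¹ • (l • u' t) := by
        funext t; rw [smul_smul]
      rw [heq]
      calc rhoE T Φ (fun t => R.toReal⁻¹ • (l • u' t))
          ≤ ENNReal.ofReal R.toReal⁻¹ * R := rho_scale hΦconv hΦ00 (by positivity) hκ1 _
        _ = 1 := by
            rw [ENNReal.ofReal_inv_of_pos hκpos, ENNReal.ofReal_toReal hRnetop,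
              ENNReal.inv_mul_cancel hRne0 hRnetop]
  have hL0 : 0 ≤ sInf S := Real.sInf_nonneg fun x hx => hx.1.le
  -- interval integrability of u' on subintervals
  have hintsub : ∀ a b : ℝ, a ∈ Icc (0:ℝ) T → b ∈ Icc (0:ℝ) T →
      IntervalIntegrable u' volume a b := by
    intro a b ha hb
    rw [intervalIntegrable_iff]
    refine hu'int.mono_set fun x hx => ?_
    rw [Set.mem_uIoc] at hx
    rcases hx with ⟨h1, h2⟩ | ⟨h1, h2⟩
    · exact ⟨ha.1.trans h1.le, h2.trans hb.2⟩
    · exact ⟨hb.1.trans h1.le, h2.trans ha.2⟩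
  have hdiff : ∀ s ∈ Icc (0:ℝ) T, u t - u s = ∫ x in s..t, u' x := by
    intro s hs
    rw [hAC t ht, hAC s hs, add_sub_add_left_eq_sub]
    exact intervalIntegral.integral_interval_sub_left (hintsub 0 t ⟨le_refl 0, hT.le⟩ ht)
      (hintsub 0 s ⟨le_refl 0, hT.le⟩ hs)
  set I : ℝ := ∫ s in Icc (0:ℝ) T, ‖u' s‖ with hIdef
  have hI0 : 0 ≤ I := integral_nonneg fun s => norm_nonneg _
  have hbound : ∀ s ∈ Icc (0:ℝ) T, ‖u t - u s‖ ≤ I := by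
    intro s hs
    rw [hdiff s hs]
    have key : ∀ a b : ℝ, a ∈ Icc (0:ℝ) T → b ∈ Icc (0:ℝ) T → a ≤ b →
        ‖∫ x in a..b, u' x‖ ≤ I := by
      intro a b ha hb hab
      calc ‖∫ x in a..b, u' x‖ ≤ ∫ x in a..b, ‖u' x‖ :=
            intervalIntegral.norm_integral_le_integral_norm hab
        _ = ∫ x in Ioc a b, ‖u' x‖ := intervalIntegral.integral_of_le hab
        _ ≤ I := by
            refine setIntegral_mono_set hu'int.norm (ae_of_all _ fun x => norm_nonneg _) ?_
            exact HasSubset.Subset.eventuallyLE fun x hx => ⟨ha.1.trans hx.1.le, hx.2.trans hb.2⟩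
    rcases le_total s t with h | h
    · exact key s t hs ht h
    · rw [intervalIntegral.integral_symm, norm_neg]; exact key t s ht hs h
  have hvol : (volume (Icc (0:ℝ) T)).toReal = T := by
    rw [Real.volume_Icc, sub_zero, ENNReal.toReal_ofReal hT.le]
  have hu_int : IntegrableOn u (Icc (0:ℝ) T) volume := by
    have hicc : Icc (0:ℝ) T = uIcc 0 T := (uIcc_of_le hT.le).symm
    have hF : ContinuousOn (fun s => u 0 + ∫ x in (0:ℝ)..s, u' x) (Icc (0:ℝ) T) := by
      refine ContinuousOn.add continuousOn_const ?_
      rw [hicc]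
      exact intervalIntegral.continuousOn_primitive_interval (by rwa [← hicc])
    exact (hF.integrableOn_Icc).congr_fun (fun s hs => (hAC s hs).symm) measurableSet_Icc
  have hconst_int : IntegrableOn (fun _ : ℝ => u t) (Icc (0:ℝ) T) volume :=
    (integrableOn_const_iff).mpr (Or.inr (by rw [Real.volume_Icc]; exact ENNReal.ofReal_lt_top))
  -- Step A : pointwise bound by ∫ ‖u'‖
  have keyA : ‖u t - T⁻¹ • ∫ s in Icc (0:ℝ) T, u s‖ ≤ I := by
    have h1 : ∫ s in Icc (0:ℝ) T, (u t - u s) = T • u t - ∫ s in Icc (0:ℝ) T, u s := by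
      rw [integral_sub hconst_int hu_int, setIntegral_const, measureReal_def, hvol]
    have h2 : u t - T⁻¹ • ∫ s in Icc (0:ℝ) T, u s
        = T⁻¹ • ∫ s in Icc (0:ℝ) T, (u t - u s) := by
      rw [h1, smul_sub, smul_smul, inv_mul_cancel₀ hT.ne', one_smul]
    rw [h2, norm_smul, Real.norm_of_nonneg (inv_nonneg.mpr hT.le)]
    have h3 : ‖∫ s in Icc (0:ℝ) T, (u t - u s)‖ ≤ ∫ s in Icc (0:ℝ) T, ‖u t - u s‖ :=
      norm_integral_le_integral_norm _
    have h4 : ∫ s in Icc (0:ℝ) T, ‖u t - u s‖ ≤ ∫ s in Icc (0:ℝ) T, I := by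
      refine setIntegral_mono_on ((hconst_int.sub hu_int).norm) ?_ measurableSet_Icc
        (fun s hs => hbound s hs)
      exact (integrableOn_const_iff).mpr (Or.inr (by rw [Real.volume_Icc]; exact ENNReal.ofReal_lt_top))
    have h5 : ∫ s in Icc (0:ℝ) T, (I : ℝ) = T * I := by
      rw [setIntegral_const, measureReal_def, hvol, smul_eq_mul]
    calc T⁻¹ * ‖∫ s in Icc (0:ℝ) T, (u t - u s)‖ ≤ T⁻¹ * (T * I) := by
          refine mul_le_mul_of_nonneg_left ?_ (inv_nonneg.mpr hT.le)
          exact h3.trans (h4.trans h5.le)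
      _ = I := by field_simp
  -- Step B : bound ∫ ‖u'‖ by the RHS
  set c : ℝ := AbarInv (1 / T) with hcdef
  have hc0 : 0 ≤ c := (hAbarInv (1 / T) (mem_Ici.mpr (by positivity))).1
  have hcA : Abar c = 1 / T := (hAbarInv (1 / T) (mem_Ici.mpr (by positivity))).2
  rw [hlux]
  rcases Nat.eq_zero_or_pos d with hd | hd
  · -- trivial case d = 0
    subst hd
    have hz : ∀ s, u' s = 0 := fun s => Subsingleton.elim _ _
    have : I = 0 := by simp [hIdef, hz]
    refine (keyA.trans this.le).trans ?_
    exact mul_nonneg (mul_nonneg hT.le hc0) hL0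
  -- now d > 0 ; fix a unit vector e
  set e : Ed d := EuclideanSpace.single ⟨0, hd⟩ (1:ℝ) with he
  have hene : ‖e‖ = 1 := by rw [he, EuclideanSpace.norm_single]; norm_num
  have hAbar_r : ∀ r : ℝ, 0 ≤ r → Abar r = APhi Φ (r • e) := by
    intro r hr
    have hnr : ‖r • e‖ = r := by rw [norm_smul, hene, mul_one, Real.norm_of_nonneg hr]
    calc Abar r = Abar ‖r • e‖ := by rw [hnr]
      _ = APhi Φ (r • e) := hAbar _
  haveI : IsFiniteMeasure (volume.restrict (Icc (0:ℝ) T)) :=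
    ⟨by rw [Measure.restrict_apply_univ, Real.volume_Icc]; exact ENNReal.ofReal_lt_top⟩
  haveI : NeZero (volume.restrict (Icc (0:ℝ) T)) :=
    ⟨by
      rw [Ne, Measure.restrict_eq_zero, Real.volume_Icc, sub_zero, ENNReal.ofReal_eq_zero]
      exact not_le.mpr hT⟩
  have main : ∀ lam : ℝ, sInf S < lam → I ≤ T * c * lam := by
    intro lam hlam
    obtain ⟨m', hm'S, hm'lt⟩ := exists_lt_of_csInf_lt hSne hlam
    obtain ⟨hm'pos, hm'rho⟩ := hm'S
    have hlampos : 0 < lam := hm'pos.trans hm'lt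
    have hratio : rhoE T Φ (fun s => lam⁻¹ • u' s) ≤ ENNReal.ofReal (m' / lam) := by
      have heq : (fun s : ℝ => lam⁻¹ • u' s) = fun s => (m' / lam) • (m'⁻¹ • u' s) := by
        funext s; rw [smul_smul]; congr 1; field_simp
      rw [heq]
      calc rhoE T Φ (fun s => (m' / lam) • (m'⁻¹ • u' s))
          ≤ ENNReal.ofReal (m' / lam) * rhoE T Φ (fun s => m'⁻¹ • u' s) :=
            rho_scale hΦconv hΦ00 (by positivity)
              (by rw [div_le_one hlampos]; exact hm'lt.le) _
        _ ≤ ENNReal.ofReal (m' / lam) * 1 := mul_le_mul_right hm'rho _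
        _ = ENNReal.ofReal (m' / lam) := mul_one _
    have hmeas : AEStronglyMeasurable (fun s => Φ (lam⁻¹ • u' s))
        (volume.restrict (Icc (0:ℝ) T)) := by
      have hsm : AEMeasurable (fun s => lam⁻¹ • u' s) (volume.restrict (Icc (0:ℝ) T)) :=
        hLphi.1.const_smul lam⁻¹
      exact (hΦdiff.continuous.measurable.comp_aemeasurable hsm).aestronglyMeasurable
    have hnn : 0 ≤ᵐ[volume.restrict (Icc (0:ℝ) T)] fun s => Φ (lam⁻¹ • u' s) :=
      ae_of_all _ fun s => hΦ0le _
    have hΦint : Integrable (fun s => Φ (lam⁻¹ • u' s)) (volume.restrict (Icc (0:ℝ) T)) := by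
      refine ⟨hmeas, ?_⟩
      rw [hasFiniteIntegral_iff_ofReal hnn]
      exact hratio.trans_lt ENNReal.ofReal_lt_top
    set f : ℝ → Ed d := fun s => (lam⁻¹ * ‖u' s‖) • e with hf
    have hfrad : ∀ s, APhi Φ (f s) = APhi Φ (lam⁻¹ • u' s) := by
      intro s
      refine aphi_radial ?_
      rw [hf, norm_smul, norm_smul, hene, mul_one,
        Real.norm_of_nonneg (by positivity : (0:ℝ) ≤ lam⁻¹ * ‖u' s‖),
        Real.norm_of_nonneg (inv_nonneg.mpr hlampos.le)]
    have hfint : Integrable f (volume.restrict (Icc (0:ℝ) T)) :=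
      (hu'int.norm.const_mul lam⁻¹).smul_const e
    have hAcont : Continuous (APhi Φ) :=
      continuousOn_univ.mp ((aphi_convex hΦ0le).continuousOn isOpen_univ)
    have hgint : Integrable (fun s => APhi Φ (f s)) (volume.restrict (Icc (0:ℝ) T)) := by
      refine Integrable.mono' hΦint (hAcont.comp_aestronglyMeasurable hfint.1) ?_
      refine ae_of_all _ fun s => ?_
      rw [Real.norm_of_nonneg (aphi_nonneg hΦ0le _), hfrad s]
      exact aphi_le hΦ0le _
    have hjen := (aphi_convex hΦ0le).map_average_le
      ((aphi_convex hΦ0le).continuousOn isOpen_univ) isClosed_univ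
      (ae_of_all _ fun s => mem_univ (f s)) hfint hgint
    set m : ℝ := T⁻¹ * (lam⁻¹ * I) with hm
    have hm0 : 0 ≤ m := by
      rw [hm]
      exact mul_nonneg (inv_nonneg.mpr hT.le) (mul_nonneg (inv_nonneg.mpr hlampos.le) hI0)
    have havg_f : ⨍ s, f s ∂(volume.restrict (Icc (0:ℝ) T)) = m • e := by
      rw [average_eq, measureReal_def, Measure.restrict_apply_univ, Real.volume_Icc, sub_zero,
        ENNReal.toReal_ofReal hT.le, hf, integral_smul_const, integral_const_mul,
        smul_smul, hm, hIdef]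
    have hrval : ∫ s in Icc (0:ℝ) T, Φ (lam⁻¹ • u' s)
        = (rhoE T Φ (fun s => lam⁻¹ • u' s)).toReal := by
      rw [integral_eq_lintegral_of_nonneg_ae hnn hmeas]; rfl
    have htoReal : (rhoE T Φ (fun s => lam⁻¹ • u' s)).toReal ≤ m' / lam := by
      have := ENNReal.toReal_mono ENNReal.ofReal_ne_top hratio
      rwa [ENNReal.toReal_ofReal (by positivity)] at this
    have hstrict : Abar m < 1 / T := by
      calc Abar m = APhi Φ (m • e) := hAbar_r m hm0
        _ ≤ ⨍ s, APhi Φ (f s) ∂(volume.restrict (Icc (0:ℝ) T)) := by rw [← havg_f]; exact hjen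
        _ ≤ ⨍ s, Φ (lam⁻¹ • u' s) ∂(volume.restrict (Icc (0:ℝ) T)) := by
            rw [average_eq, average_eq, smul_eq_mul, smul_eq_mul]
            refine mul_le_mul_of_nonneg_left ?_ (by positivity)
            refine integral_mono hgint hΦint fun s => ?_
            rw [hfrad s]; exact aphi_le hΦ0le _
        _ = T⁻¹ * (rhoE T Φ (fun s => lam⁻¹ • u' s)).toReal := by
            rw [average_eq, measureReal_def, Measure.restrict_apply_univ, Real.volume_Icc, sub_zero,
              ENNReal.toReal_ofReal hT.le, smul_eq_mul, hrval]
        _ ≤ T⁻¹ * (m' / lam) := mul_le_mul_of_nonneg_left htoReal (by positivity)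
        _ < T⁻¹ * 1 := by
            refine mul_lt_mul_of_pos_left ?_ (by positivity)
            rw [div_lt_one hlampos]; exact hm'lt
        _ = 1 / T := by rw [mul_one, one_div]
    have hmc : m ≤ c := by
      by_contra hmc
      push_neg at hmc
      have hmono : Abar c ≤ Abar m := by
        rw [hAbar_r c hc0, hAbar_r m hm0]
        refine aphi_mono hΦ0le ?_
        rw [norm_smul, norm_smul, hene, mul_one, mul_one, Real.norm_of_nonneg hc0,
          Real.norm_of_nonneg hm0]
        exact hmc.le
      rw [hcA] at hmono
      exact absurd (hmono.trans_lt hstrict) (lt_irrefl _)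
    have hIeq : I = T * lam * m := by rw [hm]; field_simp
    calc I = T * lam * m := hIeq
      _ ≤ T * lam * c := mul_le_mul_of_nonneg_left hmc (by positivity)
      _ = T * c * lam := by ring
  -- conclude : I ≤ T * c * sInf S
  have hfinal : I ≤ T * c * sInf S := by
    rcases eq_or_lt_of_le (mul_nonneg hT.le hc0) with hK | hK
    · have h := main (sInf S + 1) (lt_add_of_pos_right _ one_pos)
      rw [← hK, zero_mul] at h ⊢
      exact h
    · by_contra hcon
      push_neg at hcon
      have h1 : sInf S < I / (T * c) := by rw [lt_div_iff₀ hK]; linarith [hcon]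
      set lam : ℝ := (sInf S + I / (T * c)) / 2 with hlamdef
      have h2 : sInf S < lam := by rw [hlamdef]; linarith
      have h3 : lam < I / (T * c) := by rw [hlamdef]; linarith
      have h4 := main lam h2
      rw [lt_div_iff₀ hK] at h3
      linarith
  exact keyA.trans hfinal
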